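/- Distance of the auxiliary code for permuted product codes: Let F_q be a finite field of characteristic p, set s = p and n = q−1, and let γ be a primitive element of F_q^* (so γ has multiplicative order n). Note gcd(s,n) = 1. Let α ∈ F_q, β ∈ F_q^*, and let r and d2 be integers with 1 ≤ r ≤ s and 1 ≤ d2 ≤ n. Then for every nonzero polynomial p ∈ F_q[X,Y] with deg_X p < r and deg_Y p < d2, the number of indices j ∈ {0,…,n−1} such that p(α + i, γ^{js+i}·β) = 0 for all i ∈ {0,…,r−1} is at most d2 − 1. Equivalently, every nonzero codeword of the corresponding bivariate linear operator code (with operators T_i(p) = p(X+i, γ^i Y) and evaluation points (α, γ^{js}β)) has at least n − d2 + 1 nonzero coordinates. -/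
import Mathlib


open MvPolynomial

noncomputable section

/-- `deg_X p < r` and `deg_Y p < d2` (with the convention `deg 0 = -∞`). -/
def DegLT (F : Type) [Field F] (t k : ℕ) (p : MvPolynomial (Fin 2) F) : Prop :=
  ∀ m ∈ p.support, m 0 < t ∧ m 1 < k

/-- Evaluating a polynomial-valued `aeval` of a bivariate polynomial. -/
lemma ppc_eval_aeval {F : Type} [CommRing F] (f : Fin 2 → Polynomial F)
    (p : MvPolynomial (Fin 2) F) (y : F) :
    (MvPolynomial.aeval f p).eval y = MvPolynomial.eval (fun v => (f v).eval y) p := by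
  induction p using MvPolynomial.induction_on with
  | C a => simp
  | add p q hp hq => simp [hp, hq]
  | mul_X p i hp => simp [hp]

/-- Degree bound for polynomial-valued `aeval` of a bivariate polynomial. -/
lemma ppc_natDegree_aeval_lt {F : Type} [CommRing F] (f : Fin 2 → Polynomial F)
    (t0 t1 : ℕ) (h0 : (f 0).natDegree ≤ t0) (h1 : (f 1).natDegree ≤ t1)
    (p : MvPolynomial (Fin 2) F) (k : ℕ) (hk : 0 < k)
    (hp : ∀ m ∈ p.support, t0 * m 0 + t1 * m 1 < k) :
    (MvPolynomial.aeval f p).natDegree < k := by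
  rw [MvPolynomial.aeval_def, MvPolynomial.eval₂_eq']
  have hle : ((∑ d ∈ p.support,
      algebraMap F (Polynomial F) (MvPolynomial.coeff d p) * ∏ i, f i ^ d i)).natDegree
      ≤ k - 1 := by
    apply Polynomial.natDegree_sum_le_of_forall_le
    intro d hd
    have h2 : (algebraMap F (Polynomial F) (MvPolynomial.coeff d p) * ∏ i, f i ^ d i).natDegree
        ≤ 0 + (d 0 * t0 + d 1 * t1) := by
      refine Polynomial.natDegree_mul_le.trans (add_le_add ?_ ?_)
      · simp
      · rw [Fin.prod_univ_two]
        refine Polynomial.natDegree_mul_le.trans (add_le_add ?_ ?_)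
        · exact Polynomial.natDegree_pow_le.trans (Nat.mul_le_mul_left _ h0)
        · exact Polynomial.natDegree_pow_le.trans (Nat.mul_le_mul_left _ h1)
    refine h2.trans ?_
    have h3 := hp d hd
    rw [Nat.mul_comm t0, Nat.mul_comm t1] at h3
    omega
  omega

/-- Distance of the auxiliary code for permuted product codes: over `F_q` of
characteristic `p`, with `s = p`, `n = q - 1`, `γ` primitive, every nonzero `p` with
`deg_X p < r`, `deg_Y p < d2` vanishes on all of `(α + i, γ^{js+i}·β)`, `i < r`, for
at most `d2 - 1` indices `j < n`; equivalently, every nonzero codeword of the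
corresponding bivariate linear operator code (operators `T_i(p) = p(X+i, γ^i Y)`,
evaluation points `(α, γ^{js}·β)`) has at least `n - d2 + 1` nonzero coordinates. -/
theorem ppc_auxiliary_code_distance
    {F : Type} [Field F] [Fintype F] {q pc n r d2 : ℕ}
    (hq : Fintype.card F = q)
    (hchar : CharP F pc) (hpp : pc.Prime)
    (hn : n = q - 1)
    (γ : F) (hord : orderOf γ = n)
    (α β : F) (hβ : β ≠ 0)
    (hr1 : 1 ≤ r) (hrs : r ≤ pc) (hd21 : 1 ≤ d2) (hd2n : d2 ≤ n) :
    ∀ p : MvPolynomial (Fin 2) F, p ≠ 0 → DegLT F r d2 p →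
      {j : Fin n |
        ∀ i : Fin r,
          eval ![α + ((i : ℕ) : F), γ ^ ((j : ℕ) * pc + (i : ℕ)) * β] p = 0}.ncard
        ≤ d2 - 1 := by
  intro p hp0 hdeg
  classical
  by_contra hcon
  rw [not_le] at hcon
  -- basic numeric facts
  have hq0 : 0 < q := hq ▸ Fintype.card_pos
  have hn1 : 1 ≤ n := le_trans hd21 hd2n
  have hγn : γ ^ n = 1 := by rw [← hord]; exact pow_orderOf_eq_one γ
  have hγ0 : γ ≠ 0 := by
    intro h
    rw [h, zero_pow (by omega)] at hγn
    exact zero_ne_one hγn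
  have hdvd : pc ∣ q := by
    obtain ⟨m, hp', hcard⟩ := FiniteField.card F pc
    rw [hq] at hcard
    rw [hcard]
    exact dvd_pow_self pc (by positivity)
  have hpcq : pc ≤ q := Nat.le_of_dvd hq0 hdvd
  have hcop : Nat.Coprime pc n := by
    rw [Nat.Prime.coprime_iff_not_dvd hpp]
    intro hdn
    have h1 : pc ∣ q - n := Nat.dvd_sub hdvd hdn
    have h2 : q - n = 1 := by omega
    rw [h2, Nat.dvd_one] at h1
    exact absurd h1 hpp.ne_one
  -- the evaluation points are pairwise distinct
  have hginj : Function.Injective (fun j : Fin n => γ ^ ((j : ℕ) * pc) * β) := by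
    intro a b hab
    have h1 : γ ^ ((a : ℕ) * pc) = γ ^ ((b : ℕ) * pc) := mul_right_cancel₀ hβ hab
    have hou : orderOf (Units.mk0 γ hγ0) = n := by
      rw [← hord, ← orderOf_units]
      rfl
    have h1' : (Units.mk0 γ hγ0) ^ ((a : ℕ) * pc) = (Units.mk0 γ hγ0) ^ ((b : ℕ) * pc) :=
      Units.ext (by simpa using h1)
    rw [pow_eq_pow_iff_modEq, hou] at h1'
    have h2 : ((a : ℕ) : ℕ) ≡ (b : ℕ) [MOD n] :=
      Nat.ModEq.cancel_right_of_coprime (by rw [Nat.coprime_comm] at hcop; exact hcop) h1'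
    have h3 : (a : ℕ) % n = (b : ℕ) % n := h2
    exact Fin.ext (by rwa [Nat.mod_eq_of_lt a.isLt, Nat.mod_eq_of_lt b.isLt] at h3)
  -- the x-coordinates α + i are pairwise distinct
  have hxinj : Function.Injective (fun i : Fin r => α + ((i : ℕ) : F)) := by
    intro a b hab
    simp only [add_right_inj] at hab
    exact Fin.ext (CharP.natCast_injOn_Iio F pc (lt_of_lt_of_le a.isLt hrs)
      (lt_of_lt_of_le b.isLt hrs) hab)
  -- finset version of the vanishing index set
  set S : Set (Fin n) := {j : Fin n |
      ∀ i : Fin r,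
        eval ![α + ((i : ℕ) : F), γ ^ ((j : ℕ) * pc + (i : ℕ)) * β] p = 0} with hS
  have hfin : S.Finite := Set.toFinite S
  have hTcard : d2 ≤ hfin.toFinset.card := by
    rw [Set.ncard_eq_toFinset_card S hfin] at hcon
    omega
  set Y : Finset F := hfin.toFinset.image (fun j : Fin n => γ ^ ((j : ℕ) * pc) * β) with hY
  have hYcard : d2 ≤ Y.card := by
    rw [hY, Finset.card_image_of_injOn (Function.Injective.injOn hginj)]
    exact hTcard
  -- the univariate polynomials Q_i vanish on Y, have degree < d2, hence are zero
  have hQ : ∀ i : Fin r,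
      MvPolynomial.aeval
        ![Polynomial.C (α + ((i : ℕ) : F)), Polynomial.C (γ ^ (i : ℕ)) * Polynomial.X] p = 0 := by
    intro i
    apply Polynomial.eq_zero_of_natDegree_lt_card_of_eval_eq_zero' _ Y
    · intro y hy
      obtain ⟨j, hjT, rfl⟩ := Finset.mem_image.mp hy
      rw [ppc_eval_aeval]
      have hfun : (fun v => (![Polynomial.C (α + ((i : ℕ) : F)),
          Polynomial.C (γ ^ (i : ℕ)) * Polynomial.X] v).eval (γ ^ ((j : ℕ) * pc) * β))
          = ![α + ((i : ℕ) : F), γ ^ ((j : ℕ) * pc + (i : ℕ)) * β] := by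
        funext v
        fin_cases v
        · simp
        · simp [pow_add]
          ring
      rw [hfun]
      exact (hfin.mem_toFinset.mp hjT) i
    · have hlt : (MvPolynomial.aeval
          ![Polynomial.C (α + ((i : ℕ) : F)), Polynomial.C (γ ^ (i : ℕ)) * Polynomial.X]
          p).natDegree < d2 := by
        apply ppc_natDegree_aeval_lt _ 0 1
        · simp
        · refine Polynomial.natDegree_mul_le.trans ?_
          simp
        · omega
        · intro m hm
          have := hdeg m hm
          omega
      omega
  -- hence p vanishes at (α + i, z) for all z
  have hAZ : ∀ (i : Fin r) (z : F), eval ![α + ((i : ℕ) : F), z] p = 0 := by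
    intro i z
    have hb0 : (γ ^ (i : ℕ)) ≠ 0 := pow_ne_zero _ hγ0
    have h1 := congrArg (Polynomial.eval ((γ ^ (i : ℕ))⁻¹ * z)) (hQ i)
    rw [ppc_eval_aeval] at h1
    simp only [Polynomial.eval_zero] at h1
    have hfun : (fun v => (![Polynomial.C (α + ((i : ℕ) : F)),
        Polynomial.C (γ ^ (i : ℕ)) * Polynomial.X] v).eval ((γ ^ (i : ℕ))⁻¹ * z))
        = ![α + ((i : ℕ) : F), z] := by
      funext v
      fin_cases v
      · simp
      · simp
        field_simp
    rwa [hfun] at h1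
  -- hence p vanishes everywhere
  have hXZ : ∀ x z : F, eval ![x, z] p = 0 := by
    intro x z
    have hP : MvPolynomial.aeval ![Polynomial.X, Polynomial.C z] p = 0 := by
      apply Polynomial.eq_zero_of_natDegree_lt_card_of_eval_eq_zero _ hxinj
      · intro i
        rw [ppc_eval_aeval]
        have hfun : (fun v => (![Polynomial.X, Polynomial.C z] v).eval (α + ((i : ℕ) : F)))
            = ![α + ((i : ℕ) : F), z] := by
          funext v
          fin_cases v <;> simp
        rw [hfun]
        exact hAZ i z
      · rw [Fintype.card_fin]
        apply ppc_natDegree_aeval_lt _ 1 0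
        · simp
        · simp
        · omega
        · intro m hm
          have := hdeg m hm
          omega
    have h1 := congrArg (Polynomial.eval x) hP
    rw [ppc_eval_aeval] at h1
    simp only [Polynomial.eval_zero] at h1
    have hfun : (fun v => (![Polynomial.X, Polynomial.C z] v).eval x) = ![x, z] := by
      funext v
      fin_cases v <;> simp
    rwa [hfun] at h1
  -- a low-degree polynomial vanishing everywhere is zero
  apply hp0
  apply MvPolynomial.eq_zero_of_eval_eq_zero
  · intro v
    have hv : v = ![v 0, v 1] := by
      funext w
      fin_cases w <;> rfl
    rw [hv]
    exact hXZ (v 0) (v 1)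
  · rw [MvPolynomial.mem_restrictDegree]
    intro s hs i
    obtain ⟨h0, h1⟩ := hdeg s hs
    rw [hq]
    fin_cases i
    · simpa using (by omega : s 0 ≤ q - 1)
    · simpa using (by omega : s 1 ≤ q - 1)

end
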